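/- Let g : ℝ^p → ℝ be strictly convex with strong convexity modulus implied by l·I ⪯ ∇²g, 0 < l, with ∇g Lipschitz of constant Λ, let τ ∈ ℝ^p have nonnegative entries, and let 0 < ϖ < 2/Λ. Then the fixed-point iteration b^(n+1) = S(b^(n) - ϖ∇g(b^(n)); ϖτ) converges to the unique minimizer of β ↦ g(β) + Σ_j τ_j|β_j|. -/

import Mathlib

set_option maxHeartbeats 1000000

/-- Univariate soft-thresholding operator. -/
noncomputable def soft (u v : ℝ) : ℝ := Real.sign u * max (|u| - v) 0

/-- Componentwise soft-thresholding map. -/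
noncomputable def softVec {p : ℕ} (u v : EuclideanSpace ℝ (Fin p)) :
    EuclideanSpace ℝ (Fin p) :=
  (WithLp.equiv 2 (Fin p → ℝ)).symm fun j => soft (u j) (v j)

open RealInnerProductSpace

lemma aux_max {a x y : ℝ} (h : y ≤ x) : max a x - max a y ≤ x - y := by
  rcases le_total a x with h1|h1 <;> rcases le_total a y with h2|h2 <;>
    simp [max_eq_left, max_eq_right, *] <;> linarith

lemma aux_min {b x y : ℝ} (h : y ≤ x) : min b x - min b y ≤ x - y := by
  rcases le_total b x with h1|h1 <;> rcases le_total b y with h2|h2 <;>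
    simp [min_eq_left, min_eq_right, *] <;> linarith

lemma soft_eq_clamp (u v : ℝ) (hv : 0 ≤ v) : soft u v = u - max (-v) (min v u) := by
  rcases lt_trichotomy u 0 with h|h|h
  · rw [soft, Real.sign_of_neg h, abs_of_neg h, min_eq_right (by linarith : u ≤ v)]
    rcases le_total (-v) u with h2|h2
    · rw [max_eq_right h2, max_eq_right (by linarith : -u - v ≤ 0)]; ring
    · rw [max_eq_left h2, max_eq_left (by linarith : (0:ℝ) ≤ -u - v)]; ring
  · subst h
    simp [soft, min_eq_right hv, max_eq_right (neg_nonpos.2 hv)]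
  · rw [soft, Real.sign_of_pos h, abs_of_pos h]
    rcases le_total u v with h2|h2
    · rw [min_eq_right h2, max_eq_right (by linarith : -v ≤ u),
        max_eq_right (by linarith : u - v ≤ 0)]; ring
    · rw [min_eq_left h2, max_eq_right (by linarith : -v ≤ v),
        max_eq_left (by linarith : (0:ℝ) ≤ u - v)]; ring

lemma soft_lip (v : ℝ) (hv : 0 ≤ v) (u u' : ℝ) :
    |soft u v - soft u' v| ≤ |u - u'| := by
  wlog h : u' ≤ u generalizing u u'
  · rw [abs_sub_comm, abs_sub_comm u u']; exact this u' u (le_of_not_ge h)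
  rw [soft_eq_clamp u v hv, soft_eq_clamp u' v hv]
  have h1 : max (-v) (min v u') ≤ max (-v) (min v u) :=
    max_le_max le_rfl (min_le_min le_rfl h)
  have h2 : max (-v) (min v u) - max (-v) (min v u') ≤ u - u' :=
    le_trans (aux_max (min_le_min le_rfl h)) (aux_min h)
  rw [abs_of_nonneg (by linarith), abs_of_nonneg (by linarith)]; linarith

lemma soft_subgrad {ϖ x d t : ℝ} (hϖ : 0 < ϖ) (ht : 0 ≤ t)
    (hfix : x = soft (x - ϖ * d) (ϖ * t)) (s : ℝ) :
    t * |x| - d * (s - x) ≤ t * |s| := by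
  rcases lt_trichotomy x 0 with hx|hx|hx
  · -- show d = t
    have hd : d = t := by
      set u := x - ϖ * d with hu
      rcases lt_trichotomy u 0 with h|h|h
      · rw [soft, Real.sign_of_neg h, abs_of_neg h] at hfix
        rcases le_total (-u - ϖ * t) 0 with h2|h2
        · rw [max_eq_right h2] at hfix; simp at hfix; linarith
        · rw [max_eq_left h2] at hfix
          have h3 : ϖ * d = ϖ * t := by linarith [hfix]
          exact mul_left_cancel₀ (ne_of_gt hϖ) h3
      · rw [soft, h, Real.sign_zero] at hfix; simp at hfix; linarith
      · rw [soft, Real.sign_of_pos h, abs_of_pos h] at hfix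
        have hmax : (0:ℝ) ≤ max (u - ϖ * t) 0 := le_max_right _ _
        nlinarith [hfix]
    subst hd
    rw [abs_of_neg hx]
    nlinarith [neg_abs_le s, abs_nonneg s]
  · subst hx
    have hd : |d| ≤ t := by
      by_contra hc
      push_neg at hc
      have hd0 : d ≠ 0 := by intro h; rw [h] at hc; simp at hc; linarith
      have h1 : (0:ℝ) - ϖ * d ≠ 0 := by
        simp only [zero_sub, ne_eq, neg_eq_zero]
        exact mul_ne_zero (ne_of_gt hϖ) hd0
      rw [soft] at hfix
      have h2 : |0 - ϖ * d| - ϖ * t > 0 := by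
        rw [zero_sub, abs_neg, abs_mul, abs_of_pos hϖ]; nlinarith
      rw [max_eq_left (le_of_lt h2)] at hfix
      have h3 : Real.sign (0 - ϖ * d) ≠ 0 := fun hh => h1 (Real.sign_eq_zero_iff.mp hh)
      exact (mul_ne_zero h3 (ne_of_gt h2)) hfix.symm
    have k1 : -(d * s) ≤ |d * s| := neg_le_abs _
    have k2 : |d * s| = |d| * |s| := abs_mul d s
    have k3 : |d| * |s| ≤ t * |s| := mul_le_mul_of_nonneg_right hd (abs_nonneg s)
    simp only [abs_zero, mul_zero]
    linarith
  · -- show d = -t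
    have hd : d = -t := by
      set u := x - ϖ * d with hu
      rcases lt_trichotomy u 0 with h|h|h
      · rw [soft, Real.sign_of_neg h, abs_of_neg h] at hfix
        nlinarith [le_max_right (-u - ϖ * t) (0:ℝ), hfix]
      · rw [soft, h, Real.sign_zero] at hfix; simp at hfix; linarith
      · rw [soft, Real.sign_of_pos h, abs_of_pos h] at hfix
        rcases le_total (u - ϖ * t) 0 with h2|h2
        · rw [max_eq_right h2] at hfix; simp at hfix; linarith
        · rw [max_eq_left h2] at hfix; nlinarith [hfix]
    subst hd
    rw [abs_of_pos hx]
    nlinarith [le_abs_self s]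

open RealInnerProductSpace in
lemma norm_le_of_symm_form {E : Type*} [NormedAddCommGroup E] [InnerProductSpace ℝ E]
    (B : E →L[ℝ] E) (q : ℝ) (hq : 0 ≤ q)
    (hsymm : ∀ v w, ⟪B v, w⟫ = ⟪v, B w⟫)
    (hbound : ∀ v, |⟪B v, v⟫| ≤ q * ‖v‖ ^ 2)
    (v : E) : ‖B v‖ ≤ q * ‖v‖ := by
  rcases eq_or_ne v 0 with rfl|hv
  · simp
  rcases eq_or_ne (B v) 0 with h0|h0
  · rw [h0, norm_zero]; positivity
  have hvn : (0:ℝ) < ‖v‖ := norm_pos_iff.2 hv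
  have hBn : (0:ℝ) < ‖B v‖ := norm_pos_iff.2 h0
  set t : ℝ := Real.sqrt (‖B v‖ / ‖v‖) with htdef
  have htpos : 0 < t := Real.sqrt_pos.2 (div_pos hBn hvn)
  have ht2 : t ^ 2 = ‖B v‖ / ‖v‖ := Real.sq_sqrt (le_of_lt (div_pos hBn hvn))
  set u : E := t • v with hu
  set w : E := t⁻¹ • B v with hw
  have key : ⟪B u, w⟫ = ‖B v‖ ^ 2 := by
    rw [hu, hw, map_smul, real_inner_smul_left, real_inner_smul_right,
      real_inner_self_eq_norm_sq]
    field_simp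
  have symm_uw : ⟪B w, u⟫ = ⟪B u, w⟫ := by
    rw [hsymm w u, real_inner_comm]
  have expand : ⟪B (u+w), u+w⟫ - ⟪B (u-w), u-w⟫ = 4 * ⟪B u, w⟫ := by
    simp only [map_add, map_sub, inner_add_left, inner_add_right, inner_sub_left,
      inner_sub_right]
    linarith [symm_uw]
  have par : ‖u+w‖ ^ 2 + ‖u-w‖ ^ 2 = 2 * ‖u‖ ^ 2 + 2 * ‖w‖ ^ 2 := by
    have h1 := norm_add_sq_real u w
    have h2 := norm_sub_sq_real u w
    linarith
  have hun : ‖u‖ ^ 2 = ‖B v‖ * ‖v‖ := by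
    rw [hu, norm_smul, mul_pow, Real.norm_eq_abs, sq_abs, ht2]
    field_simp
  have hwn : ‖w‖ ^ 2 = ‖v‖ * ‖B v‖ := by
    rw [hw, norm_smul, mul_pow, Real.norm_eq_abs, sq_abs, inv_pow, ht2]
    field_simp
  have bnd1 : ⟪B (u+w), u+w⟫ ≤ q * ‖u+w‖ ^ 2 := le_trans (le_abs_self _) (hbound _)
  have bnd2 : -⟪B (u-w), u-w⟫ ≤ q * ‖u-w‖ ^ 2 := le_trans (neg_le_abs _) (hbound _)
  have final : 4 * ‖B v‖ ^ 2 ≤ 4 * (q * (‖B v‖ * ‖v‖)) := by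
    have : 4 * ⟪B u, w⟫ ≤ q * (‖u+w‖ ^ 2 + ‖u-w‖ ^ 2) := by
      rw [mul_add]; linarith
    rw [key] at this
    rw [par, hun, hwn] at this
    linarith [this]
  have : ‖B v‖ ^ 2 ≤ q * ‖v‖ * ‖B v‖ := by nlinarith
  nlinarith

variable {p : ℕ}
local notation "E" => EuclideanSpace ℝ (Fin p)

lemma inner_gradient_eq (g : E → ℝ) (x v : E) :
    ⟪gradient g x, v⟫ = fderiv ℝ g x v :=
  InnerProductSpace.toDual_symm_apply

lemma hess_upper (g : E → ℝ) (Λ : ℝ) (hC2 : ContDiff ℝ 2 g)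
    (hLip : ∀ x y : E, ‖gradient g x - gradient g y‖ ≤ Λ * ‖x - y‖)
    (β v : E) : fderiv ℝ (fun x => fderiv ℝ g x v) β v ≤ Λ * ‖v‖ ^ 2 := by
  have hdiff : Differentiable ℝ g := hC2.differentiable (by norm_num)
  have hC1' : ContDiff ℝ 1 (fderiv ℝ g) := hC2.fderiv_right (by norm_num)
  have hdiff' : Differentiable ℝ (fderiv ℝ g) := hC1'.differentiable (by norm_num)
  set f'' : E → E →L[ℝ] E →L[ℝ] ℝ := fderiv ℝ (fderiv ℝ g) with hf''
  have h1 : HasFDerivAt (fun x => fderiv ℝ g x v)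
      ((ContinuousLinearMap.apply ℝ ℝ v).comp (f'' β)) β :=
    (ContinuousLinearMap.apply ℝ ℝ v).hasFDerivAt.comp β (hdiff' β).hasFDerivAt
  have happly : fderiv ℝ (fun x => fderiv ℝ g x v) β v = f'' β v v := by
    rw [h1.fderiv]; rfl
  rw [happly]
  set φ : ℝ → ℝ := fun t => fderiv ℝ g (β + t • v) v with hφ
  have hc : ∀ t : ℝ, HasDerivAt (fun s : ℝ => β + s • v) v t := by
    intro t
    simpa using ((hasDerivAt_id t).smul_const v).const_add β
  have hφ' : HasDerivAt φ (f'' β v v) 0 := by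
    have h1 : HasFDerivAt (fun x => fderiv ℝ g x v)
        ((ContinuousLinearMap.apply ℝ ℝ v).comp (f'' β)) β :=
      (ContinuousLinearMap.apply ℝ ℝ v).hasFDerivAt.comp β (hdiff' β).hasFDerivAt
    have h1' : HasFDerivAt (fun x => fderiv ℝ g x v)
        ((ContinuousLinearMap.apply ℝ ℝ v).comp (f'' β)) (β + (0:ℝ) • v) := by
      simpa using h1
    have h2 := h1'.comp_hasDerivAt (x := (0:ℝ)) (hc 0)
    exact h2
  have hslope : ∀ t : ℝ, t ≠ 0 → (φ t - φ 0) / t ≤ Λ * ‖v‖ ^ 2 := by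
    intro t htne
    have hdiffφ : φ t - φ 0 = ⟪gradient g (β + t • v) - gradient g β, v⟫ := by
      rw [inner_sub_left, inner_gradient_eq, inner_gradient_eq]
      simp [hφ]
    have habs : |φ t - φ 0| ≤ Λ * ‖v‖ ^ 2 * |t| := by
      rw [hdiffφ]
      calc |⟪gradient g (β + t • v) - gradient g β, v⟫|
          ≤ ‖gradient g (β + t • v) - gradient g β‖ * ‖v‖ := abs_real_inner_le_norm _ _
        _ ≤ (Λ * ‖(β + t • v) - β‖) * ‖v‖ := by
            have := hLip (β + t • v) β
            exact mul_le_mul_of_nonneg_right this (norm_nonneg v)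
        _ = Λ * ‖v‖ ^ 2 * |t| := by
            simp [norm_smul, Real.norm_eq_abs]
            ring
    have h3 : |(φ t - φ 0) / t| ≤ Λ * ‖v‖ ^ 2 := by
      rw [abs_div]
      rw [div_le_iff₀ (abs_pos.2 htne)]
      linarith [habs]
    exact le_trans (le_abs_self _) h3
  have htend := hasDerivAt_iff_tendsto_slope.mp hφ'
  refine le_of_tendsto htend ?_
  filter_upwards [self_mem_nhdsWithin] with t ht
  have : slope φ 0 t = (φ t - φ 0) / t := by
    rw [slope_def_field, sub_zero]
  rw [this]
  exact hslope t ht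


lemma grad_step_contract (g : E → ℝ) (l Λ ϖ : ℝ) (hϖ0 : 0 ≤ ϖ)
    (hC2 : ContDiff ℝ 2 g)
    (hHessLow : ∀ β v : E, l * ‖v‖ ^ 2 ≤ fderiv ℝ (fun x => fderiv ℝ g x v) β v)
    (hLip : ∀ x y : E, ‖gradient g x - gradient g y‖ ≤ Λ * ‖x - y‖)
    (x y : E) :
    ‖(x - ϖ • gradient g x) - (y - ϖ • gradient g y)‖ ≤
      max |1 - ϖ * l| |1 - ϖ * Λ| * ‖x - y‖ := by
  classical
  set q : ℝ := max |1 - ϖ * l| |1 - ϖ * Λ| with hq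
  have hq0 : 0 ≤ q := le_trans (abs_nonneg _) (le_max_left _ _)
  have hdiff : Differentiable ℝ g := hC2.differentiable (by norm_num)
  have hC1' : ContDiff ℝ 1 (fderiv ℝ g) := hC2.fderiv_right (by norm_num)
  have hdiff' : Differentiable ℝ (fderiv ℝ g) := hC1'.differentiable (by norm_num)
  set f'' : E → E →L[ℝ] E →L[ℝ] ℝ := fderiv ℝ (fderiv ℝ g) with hf''
  -- symmetry of the second derivative
  have hsymm : ∀ β v w : E, f'' β v w = f'' β w v := by
    intro β v w
    exact second_derivative_symmetric (fun z => (hdiff z).hasFDerivAt)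
      ((hdiff' β).hasFDerivAt) v w
  -- relating hHessLow to f''
  have happly : ∀ β v : E, fderiv ℝ (fun x => fderiv ℝ g x v) β v = f'' β v v := by
    intro β v
    have h1 : HasFDerivAt (fun x => fderiv ℝ g x v)
        ((ContinuousLinearMap.apply ℝ ℝ v).comp (f'' β)) β :=
      (ContinuousLinearMap.apply ℝ ℝ v).hasFDerivAt.comp β (hdiff' β).hasFDerivAt
    rw [h1.fderiv]
    rfl
  have hlow : ∀ β v : E, l * ‖v‖ ^ 2 ≤ f'' β v v := by
    intro β v
    have := hHessLow β v
    rwa [happly] at this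
  have hup : ∀ β v : E, f'' β v v ≤ Λ * ‖v‖ ^ 2 := by
    intro β v
    have := hess_upper g Λ hC2 hLip β v
    rwa [happly] at this
  -- derivative of the gradient map
  set J : (E →L[ℝ] ℝ) →L[ℝ] E :=
    ((InnerProductSpace.toDual ℝ E).symm.toContinuousLinearEquiv :
      (E →L[ℝ] ℝ) ≃L[ℝ] E).toContinuousLinearMap with hJ
  have hJapp : ∀ (ℓ : E →L[ℝ] ℝ) (w : E), ⟪J ℓ, w⟫ = ℓ w := by
    intro ℓ w
    exact InnerProductSpace.toDual_symm_apply
  set DG : E → E →L[ℝ] E := fun z => J.comp (f'' z) with hDG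
  have hGrad' : ∀ z : E, HasFDerivAt (gradient g) (DG z) z := by
    intro z
    have := J.hasFDerivAt.comp z (hdiff' z).hasFDerivAt
    exact this
  set B : E → E →L[ℝ] E := fun z => ContinuousLinearMap.id ℝ E - ϖ • DG z with hB
  have hBder : ∀ z : E, HasFDerivAt (fun w : E => w - ϖ • gradient g w) (B z) z := by
    intro z
    exact (hasFDerivAt_id z).sub ((hGrad' z).const_smul ϖ)
  have hBapp : ∀ z v : E, B z v = v - ϖ • (J (f'' z v)) := by
    intro z v; simp [hB, hDG]
  have hBinner : ∀ z v w : E, ⟪B z v, w⟫ = ⟪v, w⟫ - ϖ * f'' z v w := by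
    intro z v w
    rw [hBapp, inner_sub_left, real_inner_smul_left, hJapp]
  have hBsymm : ∀ z v w : E, ⟪B z v, w⟫ = ⟪v, B z w⟫ := by
    intro z v w
    rw [hBinner, real_inner_comm (B z w) v, hBinner, hsymm z w v, real_inner_comm w v]
  have hBbound : ∀ z v : E, |⟪B z v, v⟫| ≤ q * ‖v‖ ^ 2 := by
    intro z v
    rw [hBinner, real_inner_self_eq_norm_sq]
    have h1 := hlow z v
    have h2 := hup z v
    have hql : |1 - ϖ * l| ≤ q := le_max_left _ _
    have hqΛ : |1 - ϖ * Λ| ≤ q := le_max_right _ _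
    have h3 : ϖ * ((f'' z) v) v ≤ ϖ * (Λ * ‖v‖ ^ 2) := mul_le_mul_of_nonneg_left h2 hϖ0
    have h4 : ϖ * (l * ‖v‖ ^ 2) ≤ ϖ * ((f'' z) v) v := mul_le_mul_of_nonneg_left h1 hϖ0
    have h5 : -q ≤ 1 - ϖ * Λ := le_trans (neg_le_neg hqΛ) (neg_abs_le _)
    have h6 : 1 - ϖ * l ≤ q := le_trans (le_abs_self _) hql
    have h7 : -q * ‖v‖ ^ 2 ≤ (1 - ϖ * Λ) * ‖v‖ ^ 2 :=
      mul_le_mul_of_nonneg_right h5 (sq_nonneg _)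
    have h8 : (1 - ϖ * l) * ‖v‖ ^ 2 ≤ q * ‖v‖ ^ 2 :=
      mul_le_mul_of_nonneg_right h6 (sq_nonneg _)
    rw [abs_le]
    constructor
    · nlinarith
    · nlinarith
  have hBnorm : ∀ z : E, ‖B z‖ ≤ q := by
    intro z
    exact ContinuousLinearMap.opNorm_le_bound _ hq0 fun v =>
      norm_le_of_symm_form (B z) q hq0 (hBsymm z) (hBbound z) v
  have := convex_univ.norm_image_sub_le_of_norm_hasFDerivWithin_le
    (f := fun w : E => w - ϖ • gradient g w) (f' := B)
    (fun z _ => (hBder z).hasFDerivWithinAt) (fun z _ => hBnorm z)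
    (Set.mem_univ y) (Set.mem_univ x)
  exact this

lemma softVec_apply (u v : E) (j : Fin p) : softVec u v j = soft (u j) (v j) := rfl

lemma softVec_dist (u u' w : E) (hw : ∀ j, 0 ≤ w j) :
    dist (softVec u w) (softVec u' w) ≤ dist u u' := by
  rw [EuclideanSpace.dist_eq, EuclideanSpace.dist_eq]
  apply Real.sqrt_le_sqrt
  apply Finset.sum_le_sum
  intro j _
  rw [softVec_apply, softVec_apply]
  have h := soft_lip (w j) (hw j) (u j) (u' j)
  calc dist (soft (u j) (w j)) (soft (u' j) (w j)) ^ 2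
      = |soft (u j) (w j) - soft (u' j) (w j)| ^ 2 := by rw [Real.dist_eq]
    _ ≤ |u j - u' j| ^ 2 := pow_le_pow_left₀ (abs_nonneg _) h 2
    _ = dist (u j) (u' j) ^ 2 := by rw [Real.dist_eq]

-- strict convexity along a line
lemma strict_line (g : E → ℝ) (hstrict : StrictConvexOn ℝ Set.univ g)
    (hdiff : Differentiable ℝ g) (βs β : E) (hβ : β ≠ βs) :
    fderiv ℝ g βs (β - βs) < g β - g βs := by
  set d : E := β - βs with hd'
  have hd : d ≠ 0 := sub_ne_zero.2 hβ
  set φ : ℝ → ℝ := fun t => g (βs + t • d) with hφ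
  have hφd : ∀ t : ℝ, HasDerivAt φ (fderiv ℝ g (βs + t • d) d) t := by
    intro t
    exact (hdiff _).hasFDerivAt.comp_hasDerivAt t
      (by simpa using ((hasDerivAt_id t).smul_const d).const_add βs)
  have hconv : StrictConvexOn ℝ Set.univ φ := by
    refine ⟨convex_univ, ?_⟩
    intro a _ b _ hab σ ρ hσ hρ hσρ
    have hne : βs + a • d ≠ βs + b • d := by
      intro h
      apply hab
      have h1 : a • d = b • d := add_left_cancel h
      have h2 : (a - b) • d = 0 := by rw [sub_smul, h1, sub_self]
      rcases smul_eq_zero.1 h2 with h3|h3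
      · exact sub_eq_zero.1 h3
      · exact absurd h3 hd
    have hpt : βs + (σ • a + ρ • b) • d = σ • (βs + a • d) + ρ • (βs + b • d) := by
      rw [smul_add, smul_add, smul_smul, smul_smul, add_add_add_comm, ← add_smul,
        smul_eq_mul, smul_eq_mul, ← add_smul, hσρ, one_smul]
    have := hstrict.2 (Set.mem_univ (βs + a • d)) (Set.mem_univ (βs + b • d)) hne hσ hρ hσρ
    show g (βs + (σ • a + ρ • b) • d) < σ • g (βs + a • d) + ρ • g (βs + b • d)
    rw [hpt]
    exact this
  have hslope := hconv.lt_slope_of_hasDerivWithinAt (Set.mem_univ (0:ℝ))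
    (Set.mem_univ (1:ℝ)) one_pos ((hφd 0).hasDerivWithinAt)
  have h0 : φ 0 = g βs := by simp [hφ]
  have h1 : φ 1 = g β := by simp [hφ, hd']
  rw [slope_def_field, h0, h1] at hslope
  simpa using hslope

/-- Convergence of iterated soft-thresholding to the unique minimizer of
g(β) + Σ_j τ_j|β_j| for strongly convex g with Lipschitz gradient. -/
theorem iterated_soft_thresholding_converges {p : ℕ}
    (g : EuclideanSpace ℝ (Fin p) → ℝ) (l Λ ϖ : ℝ) (τ : EuclideanSpace ℝ (Fin p))
    (hl : 0 < l) (hC2 : ContDiff ℝ 2 g)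
    (hstrict : StrictConvexOn ℝ Set.univ g)
    (hHessLow : ∀ β v : EuclideanSpace ℝ (Fin p),
      l * ‖v‖ ^ 2 ≤ fderiv ℝ (fun x => fderiv ℝ g x v) β v)
    (hLip : ∀ x y : EuclideanSpace ℝ (Fin p),
      ‖gradient g x - gradient g y‖ ≤ Λ * ‖x - y‖)
    (hτ : ∀ j, 0 ≤ τ j) (hϖ0 : 0 < ϖ) (hϖ2 : ϖ < 2 / Λ) :
    ∃ βs : EuclideanSpace ℝ (Fin p),
      (∀ β : EuclideanSpace ℝ (Fin p), β ≠ βs →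
        g βs + ∑ j, τ j * |βs j| < g β + ∑ j, τ j * |β j|) ∧
      (∀ b : ℕ → EuclideanSpace ℝ (Fin p),
        (∀ n, b (n + 1) = softVec (b n - ϖ • gradient g (b n)) (ϖ • τ)) →
        Filter.Tendsto b Filter.atTop (nhds βs)) := by
  classical
  by_cases hp : p = 0
  · subst hp
    haveI : Subsingleton (EuclideanSpace ℝ (Fin 0)) := ⟨fun a b => by ext i; exact i.elim0⟩
    refine ⟨0, fun β hβ => absurd (Subsingleton.elim β 0) hβ, fun b hb => ?_⟩
    have hbz : b = fun _ => (0 : EuclideanSpace ℝ (Fin 0)) :=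
      funext fun n => Subsingleton.elim _ _
    rw [hbz]
    exact tendsto_const_nhds
  have hp' : 0 < p := Nat.pos_of_ne_zero hp
  -- Λ is positive
  have hΛ0 : 0 < Λ := by
    by_contra h
    push_neg at h
    have h2 : 2 / Λ ≤ 0 := by
      rcases h.lt_or_eq with h'|h'
      · exact le_of_lt (div_neg_of_pos_of_neg two_pos h')
      · rw [h']; simp
    linarith
  have hϖΛ : ϖ * Λ < 2 := by
    rw [lt_div_iff₀ hΛ0] at hϖ2; exact hϖ2
  -- l ≤ Λ
  have hlΛ : l ≤ Λ := by
    set v : EuclideanSpace ℝ (Fin p) := EuclideanSpace.single ⟨0, hp'⟩ 1 with hv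
    have hnv : ‖v‖ = 1 := by rw [hv, EuclideanSpace.norm_single, norm_one]
    have := le_trans (hHessLow 0 v) (hess_upper g Λ hC2 hLip 0 v)
    rwa [hnv, one_pow, mul_one, mul_one] at this
  set q : ℝ := max |1 - ϖ * l| |1 - ϖ * Λ| with hqdef
  have hq0 : 0 ≤ q := le_trans (abs_nonneg _) (le_max_left _ _)
  have hq1 : q < 1 := by
    apply max_lt
    · rw [abs_lt]
      constructor
      · nlinarith
      · nlinarith
    · rw [abs_lt]
      constructor
      · nlinarith
      · nlinarith
  set T : EuclideanSpace ℝ (Fin p) → EuclideanSpace ℝ (Fin p) :=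
    fun x => softVec (x - ϖ • gradient g x) (ϖ • τ) with hT
  have hτ' : ∀ j, 0 ≤ (ϖ • τ) j := by
    intro j
    have : (ϖ • τ) j = ϖ * τ j := rfl
    rw [this]
    exact mul_nonneg hϖ0.le (hτ j)
  have hTlip : ∀ x y, dist (T x) (T y) ≤ q * dist x y := by
    intro x y
    calc dist (T x) (T y) ≤ dist (x - ϖ • gradient g x) (y - ϖ • gradient g y) :=
          softVec_dist _ _ _ hτ'
      _ ≤ q * dist x y := by
          rw [dist_eq_norm, dist_eq_norm]
          exact grad_step_contract g l Λ ϖ hϖ0.le hC2 hHessLow hLip x y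
  have hcontr : ContractingWith q.toNNReal T := by
    constructor
    · exact_mod_cast (by rwa [Real.coe_toNNReal _ hq0] : (q.toNNReal : ℝ) < 1)
    · apply LipschitzWith.of_dist_le_mul
      intro x y
      rw [Real.coe_toNNReal _ hq0]
      exact hTlip x y
  set βs := hcontr.fixedPoint with hβs
  have hfix : T βs = βs := hcontr.fixedPoint_isFixedPt
  refine ⟨βs, ?_, ?_⟩
  · -- strict minimality
    intro β hβ
    have hdiff : Differentiable ℝ g := hC2.differentiable (by norm_num)
    -- coordinatewise fixed-point subgradient inequality
    have hcoord : ∀ j, βs j = soft (βs j - ϖ * (gradient g βs j)) (ϖ * τ j) := by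
      intro j
      have h1 := congrArg (fun z : EuclideanSpace ℝ (Fin p) => z j) hfix
      simp only [hT] at h1
      have h2 : softVec (βs - ϖ • gradient g βs) (ϖ • τ) j
          = soft ((βs - ϖ • gradient g βs) j) ((ϖ • τ) j) := rfl
      rw [h2] at h1
      have h3 : (βs - ϖ • gradient g βs) j = βs j - ϖ * gradient g βs j := rfl
      have h4 : (ϖ • τ) j = ϖ * τ j := rfl
      rw [h3, h4] at h1
      exact h1.symm
    have hsub : ∀ j, τ j * |βs j| - (gradient g βs j) * (β j - βs j) ≤ τ j * |β j| :=
      fun j => soft_subgrad hϖ0 (hτ j) (hcoord j) (β j)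
    have hsum : ∑ j, τ j * |βs j| - ∑ j, (gradient g βs j) * (β j - βs j)
        ≤ ∑ j, τ j * |β j| := by
      rw [← Finset.sum_sub_distrib]
      exact Finset.sum_le_sum fun j _ => hsub j
    have hinner : ⟪gradient g βs, β - βs⟫ = ∑ j, (gradient g βs j) * (β j - βs j) := by
      rw [PiLp.inner_apply]
      apply Finset.sum_congr rfl
      intro j _
      have : (β - βs) j = β j - βs j := rfl
      rw [this]
      exact Real.inner_apply _ _
    have hconv := strict_line g hstrict hdiff βs β hβ
    rw [← inner_gradient_eq] at hconv
    rw [hinner] at hconv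
    linarith
  · -- convergence
    intro b hb
    have hbn : ∀ n, b n = T^[n] (b 0) := by
      intro n
      induction n with
      | zero => simp
      | succ n ih =>
        rw [hb n, ih, Function.iterate_succ_apply']
    have heq : b = fun n => T^[n] (b 0) := funext hbn
    rw [heq]
    exact hcontr.tendsto_iterate_fixedPoint (b 0)
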